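/- Let V be a finite-dimensional complex vector space, D ⊆ ℂ a domain, A : D → End(V) holomorphic, and p ∈ D. Define A_m(z) := A(z)/(z−p)^m on the kernels iteratively: λ_0 := dim ker A(p), and for m ≥ 1, λ_m := dim ker (A_m(p)|_{ker A_{m−1}(p)}), where A_{m}(p) is defined when A restricted appropriately vanishes to order m at p. Then the order of vanishing of det A(z) at p is at least λ_0 + λ_1 + λ_2 + ⋯ (the size of the singularity partition of A at p). -/

import Mathlib

open Filter Module Submodule Set

noncomputable section
namespace Stmt18Aux

variable {n : ℕ}

/-- The submodule of vectors `v` such that `z ↦ A(z)v` vanishes to order `≥ k` at `p`. -/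
def Kmod (A : ℂ → Matrix (Fin n) (Fin n) ℂ) (p : ℂ) (k : ℕ) : Submodule ℂ (Fin n → ℂ) where
  carrier := {v : Fin n → ℂ | ∀ i : Fin n,
      ∃ g' : ℂ → ℂ, AnalyticAt ℂ g' p ∧
        ∀ᶠ z in nhds p, (A z).mulVec v i = (z - p) ^ k * g' z}
  zero_mem' := by
    intro i
    exact ⟨0, analyticAt_const, by
      filter_upwards with z
      simp [Matrix.mulVec_zero]⟩
  add_mem' := by
    intro a b ha hb i
    obtain ⟨ga, hga, hga'⟩ := ha i
    obtain ⟨gb, hgb, hgb'⟩ := hb i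
    refine ⟨ga + gb, hga.add hgb, ?_⟩
    filter_upwards [hga', hgb'] with z h1 h2
    simp only [Matrix.mulVec_add, Pi.add_apply, h1, h2]
    ring
  smul_mem' := by
    intro t a ha i
    obtain ⟨ga, hga, hga'⟩ := ha i
    refine ⟨fun z => t * ga z, analyticAt_const.mul hga, ?_⟩
    filter_upwards [hga'] with z h1
    simp only [Matrix.mulVec_smul, Pi.smul_apply, h1, smul_eq_mul]
    ring

lemma Kmod_succ_le (A : ℂ → Matrix (Fin n) (Fin n) ℂ) (p : ℂ) (k : ℕ) :
    Kmod A p (k + 1) ≤ Kmod A p k := by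
  intro v hv i
  obtain ⟨g, hg, hg'⟩ := hv i
  refine ⟨fun z => (z - p) * g z, ((analyticAt_id.sub analyticAt_const).mul hg), ?_⟩
  filter_upwards [hg'] with z h1
  rw [h1]; ring

lemma Kmod_antitone (A : ℂ → Matrix (Fin n) (Fin n) ℂ) (p : ℂ) {k l : ℕ} (h : k ≤ l) :
    Kmod A p l ≤ Kmod A p k := by
  induction l with
  | zero => simp_all
  | succ l ih =>
    rcases Nat.lt_or_ge k (l + 1) with h' | h'
    · exact (Kmod_succ_le A p l).trans (ih (by omega))
    · have : k = l + 1 := by omega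
      subst this; exact le_rfl

lemma analyticAt_det {m : ℕ} {M : ℂ → Matrix (Fin m) (Fin m) ℂ} {p : ℂ}
    (h : ∀ i j, AnalyticAt ℂ (fun z => M z i j) p) :
    AnalyticAt ℂ (fun z => (M z).det) p := by
  simp only [Matrix.det_apply]
  apply Finset.analyticAt_fun_sum
  intro σ _
  have : AnalyticAt ℂ (fun z => ∏ i, M z (σ i) i) p :=
    Finset.analyticAt_fun_prod _ (fun i _ => h (σ i) i)
  have := analyticAt_const (v := ((Equiv.Perm.sign σ : ℤ) : ℂ)).mul this
  refine this.congr ?_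
  filter_upwards with z
  rw [Units.smul_def, zsmul_eq_mul]
  rfl


lemma span_range_coe2 {V : Type*} [AddCommGroup V] [Module ℂ V] (E : Submodule ℂ V)
    (P : Submodule ℂ ↥E) {ι : Type*} (bP : Basis ι ℂ ↥P) :
    Submodule.span ℂ (Set.range (fun j => ((bP j : ↥E) : V))) = Submodule.map E.subtype P := by
  have h : (fun j => ((bP j : ↥E) : V)) = ⇑(E.subtype ∘ₗ P.subtype) ∘ ⇑bP := rfl
  rw [h, Set.range_comp, ← Submodule.map_span, bP.span_eq, Submodule.map_comp,
    Submodule.map_subtype_top]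

lemma adapted (W : ℕ → Submodule ℂ (Fin n → ℂ)) (hW : ∀ j, W (j + 1) ≤ W j) (M : ℕ) :
    ∃ (b : Fin n → (Fin n → ℂ)) (o : Fin n → ℕ),
      Submodule.span ℂ (Set.range b) = ⊤ ∧
      (∀ i m, m < o i → b i ∈ W m) ∧
      (∀ m < M, W m ≤ Submodule.span ℂ (b '' {i | m < o i})) := by
  classical
  have hWle : ∀ {a b : ℕ}, a ≤ b → W b ≤ W a := by
    intro a b h
    induction b with
    | zero => simp_all
    | succ b ih =>
      rcases Nat.lt_or_ge a (b + 1) with h' | h'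
      · exact (hW b).trans (ih (by omega))
      · have : a = b + 1 := by omega
        subst this; exact le_rfl
  induction M with
  | zero =>
    refine ⟨⇑(Pi.basisFun ℂ (Fin n)), fun _ => 0, (Pi.basisFun ℂ (Fin n)).span_eq, ?_, ?_⟩
    · intro i m hm; simp at hm
    · intro m hm; simp at hm
  | succ M ih =>
    obtain ⟨b, o, hspan, hmem, hsp⟩ := ih
    set F : Finset (Fin n) := Finset.univ.filter (fun i => M ≤ o i) with hF
    have hFmem : ∀ i : Fin n, i ∈ F ↔ M ≤ o i := by intro i; simp [hF]
    have hbF : ∀ i ∈ F, ∀ m < M, b i ∈ W m := by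
      intro i hi m hm
      exact hmem i m (lt_of_lt_of_le hm ((hFmem i).1 hi))
    set E : Submodule ℂ (Fin n → ℂ) := Submodule.span ℂ (b '' ↑F) with hE
    have hWME : W M ≤ E := by
      rcases Nat.eq_zero_or_pos M with h0 | hMpos
      · subst h0
        have hFu : (↑F : Set (Fin n)) = Set.univ := by ext i; simp [hFmem i]
        rw [hE, hFu, Set.image_univ, hspan]
        exact le_top
      · obtain ⟨m, rfl⟩ : ∃ m, M = m + 1 := ⟨M - 1, by omega⟩
        refine (hW m).trans ((hsp m (by omega)).trans ?_)
        rw [hE]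
        apply Submodule.span_mono
        apply Set.image_mono
        intro i hi
        rw [Finset.mem_coe, hFmem i]
        exact hi
    have hE_le_W : ∀ m < M, E ≤ W m := by
      intro m hm
      rw [hE]
      exact Submodule.span_le.2 (by
        rintro x ⟨i, hi, rfl⟩
        exact hbF i (by simpa using hi) m hm)
    have hEcard : finrank ℂ E ≤ F.card := by
      have h1 := finrank_span_finset_le_card (R := ℂ) (F.image b)
      rw [Set.finrank] at h1
      rw [hE]
      calc finrank ℂ (Submodule.span ℂ (b '' ↑F))
          = finrank ℂ (Submodule.span ℂ ((F.image b : Finset (Fin n → ℂ)) : Set (Fin n → ℂ))) := by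
            rw [Finset.coe_image]
        _ ≤ (F.image b).card := h1
        _ ≤ F.card := Finset.card_image_le
    set U' : Submodule ℂ ↥E := (W M).comap E.subtype with hU'
    obtain ⟨C, hC⟩ := Submodule.exists_isCompl U'
    have hrankadd : finrank ℂ ↥U' + finrank ℂ ↥C = finrank ℂ ↥E :=
      Submodule.finrank_add_eq_of_isCompl hC
    set du := finrank ℂ ↥U' with hdu
    set dc := finrank ℂ ↥C with hdc
    have hducard : du + dc ≤ F.card := by rw [hdu, hdc, hrankadd]; exact hEcard
    haveI : Module.Free ℂ ↥U' := Module.Free.of_divisionRing ℂ ↥U'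
    haveI : Module.Free ℂ ↥C := Module.Free.of_divisionRing ℂ ↥C
    let bu : Basis (Fin du) ℂ ↥U' := Module.finBasis ℂ ↥U'
    let bc : Basis (Fin dc) ℂ ↥C := Module.finBasis ℂ ↥C
    let u : Fin du → (Fin n → ℂ) := fun j => ((bu j : ↥E) : Fin n → ℂ)
    let w : Fin dc → (Fin n → ℂ) := fun j => ((bc j : ↥E) : Fin n → ℂ)
    have hu_mem : ∀ j, u j ∈ W M := fun j => (bu j).2
    have hu_E : ∀ j, u j ∈ E := fun j => (bu j : ↥E).2
    have hw_E : ∀ j, w j ∈ E := fun j => (bc j : ↥E).2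
    have hspanu : Submodule.span ℂ (Set.range u) = W M := by
      rw [show Set.range u = Set.range (fun j => ((bu j : ↥E) : Fin n → ℂ)) from rfl,
        span_range_coe2 E U' bu, hU', Submodule.map_comap_subtype]
      exact inf_eq_right.2 hWME
    have hspanw : Submodule.span ℂ (Set.range w) = Submodule.map E.subtype C :=
      span_range_coe2 E C bc
    have hE_le_uw : E ≤ Submodule.span ℂ (Set.range u ∪ Set.range w) := by
      rw [Submodule.span_union, hspanu, hspanw]
      have : W M = Submodule.map E.subtype U' := by
        rw [hU', Submodule.map_comap_subtype]; exact (inf_eq_right.2 hWME).symm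
      rw [this, ← Submodule.map_sup, hC.sup_eq_top, Submodule.map_subtype_top]
    -- the new family
    let idx : ↥F ≃ Fin F.card := F.equivFin
    let f : Fin F.card → (Fin n → ℂ) := fun k =>
      if h1 : (k : ℕ) < du then u ⟨k, h1⟩
      else if h2 : (k : ℕ) - du < dc then w ⟨(k : ℕ) - du, h2⟩ else 0
    let c : Fin n → (Fin n → ℂ) := fun i => if h : i ∈ F then f (idx ⟨i, h⟩) else b i
    let o' : Fin n → ℕ := fun i =>
      if h : i ∈ F then (if ((idx ⟨i, h⟩ : Fin F.card) : ℕ) < du then M + 1 else M) else o i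
    have hfE : ∀ k, f k ∈ E := by
      intro k
      simp only [f]
      split
      · exact hu_E _
      · split
        · exact hw_E _
        · exact E.zero_mem
    have hcF_E : ∀ i (h : i ∈ F), c i ∈ E := by
      intro i h; simp only [c, dif_pos h]; exact hfE _
    have ho'_notF : ∀ i, i ∉ F → o' i = o i := by intro i h; simp only [o', dif_neg h]
    have hc_notF : ∀ i, i ∉ F → c i = b i := by intro i h; simp only [c, dif_neg h]
    have ho'_F_big : ∀ i (h : i ∈ F), M ≤ o' i := by
      intro i h; simp only [o', dif_pos h]; split <;> omega
    -- range u is contained in c-image of the top set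
    have key : ∀ k : Fin F.card, c (idx.symm k) = f k ∧ o' (idx.symm k) =
        (if (k : ℕ) < du then M + 1 else M) := by
      intro k
      have hiF : ((idx.symm k : ↥F) : Fin n) ∈ F := (idx.symm k).2
      constructor
      · simp only [c, dif_pos hiF, Subtype.coe_eta, Equiv.apply_symm_apply]
      · simp only [o', dif_pos hiF, Subtype.coe_eta, Equiv.apply_symm_apply]
    have hu_sub : Set.range u ⊆ c '' {i | M < o' i} := by
      rintro x ⟨j, rfl⟩
      have hjF : (j : ℕ) < F.card :=
        lt_of_lt_of_le (lt_of_lt_of_le j.2 (Nat.le_add_right du dc)) hducard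
      refine ⟨(idx.symm ⟨j, hjF⟩ : ↥F), ?_, ?_⟩
      · show M < o' _
        rw [(key ⟨j, hjF⟩).2, if_pos (show ((⟨(j:ℕ), hjF⟩ : Fin F.card) : ℕ) < du from j.2)]
        omega
      · rw [(key ⟨j, hjF⟩).1]
        simp only [f]
        rw [dif_pos (show ((⟨(j:ℕ), hjF⟩ : Fin F.card) : ℕ) < du from j.2)]
    have hw_sub : Set.range w ⊆ c '' ↑F := by
      rintro x ⟨j, rfl⟩
      have hjF : du + (j : ℕ) < F.card := lt_of_lt_of_le (by omega) hducard
      refine ⟨(idx.symm ⟨du + j, hjF⟩ : ↥F), (idx.symm ⟨du + j, hjF⟩).2, ?_⟩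
      rw [(key ⟨du + j, hjF⟩).1]
      simp only [f]
      have h1 : ¬ ((⟨du + (j : ℕ), hjF⟩ : Fin F.card) : ℕ) < du := by
        show ¬ (du + (j : ℕ) < du); omega
      have h2 : ((⟨du + (j : ℕ), hjF⟩ : Fin F.card) : ℕ) - du < dc := by
        show du + (j : ℕ) - du < dc
        have := j.2; omega
      rw [dif_neg h1, dif_pos h2]
      have h3 : (⟨((⟨du + (j : ℕ), hjF⟩ : Fin F.card) : ℕ) - du, h2⟩ : Fin dc) = j :=
        Fin.ext (by show du + (j : ℕ) - du = (j : ℕ); omega)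
      rw [h3]
    have hu_sub' : Set.range u ⊆ c '' ↑F := by
      refine hu_sub.trans (Set.image_mono ?_)
      intro i hi
      rw [Finset.mem_coe, hFmem i]
      have := hi
      simp only [Set.mem_setOf_eq] at this
      by_contra hnot
      push_neg at hnot
      rw [ho'_notF i (by rw [hFmem]; omega)] at this
      omega
    have hE_le_cF : E ≤ Submodule.span ℂ (c '' ↑F) :=
      hE_le_uw.trans (Submodule.span_mono (Set.union_subset hu_sub' hw_sub))
    refine ⟨c, o', ?_, ?_, ?_⟩
    · -- spanning
      rw [← top_le_iff, ← hspan]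
      apply Submodule.span_le.2
      rintro x ⟨i, rfl⟩
      by_cases h : i ∈ F
      · have hbiE : b i ∈ E := Submodule.subset_span ⟨i, h, rfl⟩
        exact (hE_le_cF.trans (Submodule.span_mono (Set.image_subset_range c ↑F))) hbiE
      · rw [← hc_notF i h]
        exact Submodule.subset_span ⟨i, rfl⟩
    · -- membership
      intro i m hm
      by_cases h : i ∈ F
      · simp only [o', dif_pos h] at hm
        simp only [c, dif_pos h]
        by_cases h2 : ((idx ⟨i, h⟩ : Fin F.card) : ℕ) < du
        · rw [if_pos h2] at hm
          have : f (idx ⟨i, h⟩) = u ⟨(idx ⟨i, h⟩ : Fin F.card), h2⟩ := by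
            simp only [f]; rw [dif_pos h2]
          rw [this]
          exact hWle (by omega) (hu_mem _)
        · rw [if_neg h2] at hm
          exact hE_le_W m hm (hfE _)
      · rw [hc_notF i h]
        exact hmem i m (by rwa [ho'_notF i h] at hm)
    · -- spanning of W m by high vectors
      intro m hm
      rcases Nat.lt_or_ge m M with hmM | hmM
      · refine (hsp m hmM).trans ?_
        apply Submodule.span_le.2
        rintro x ⟨i, hi, rfl⟩
        simp only [Set.mem_setOf_eq] at hi
        by_cases h : i ∈ F
        · have hbiE : b i ∈ E := Submodule.subset_span ⟨i, h, rfl⟩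
          refine (hE_le_cF.trans (Submodule.span_mono (Set.image_mono ?_))) hbiE
          intro i' hi'
          rw [Finset.mem_coe] at hi'
          show m < o' i'
          exact lt_of_lt_of_le hmM (ho'_F_big i' hi')
        · rw [← hc_notF i h]
          refine Submodule.subset_span ⟨i, ?_, rfl⟩
          show m < o' i
          rwa [ho'_notF i h]
      · have : m = M := by omega
        subst this
        exact (le_of_eq hspanu.symm).trans (Submodule.span_le.2 (fun x hx => Submodule.subset_span (hu_sub hx)))

end Stmt18Aux
end

set_option maxHeartbeats 1000000 in
open Stmt18Aux Module Matrix in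
/-- Let `A : D → End(ℂⁿ)` be holomorphic on a domain `D` and `p ∈ D`.  For `j ≥ 1` let
`K_j` be the subspace of vectors `v` such that `z ↦ A(z)v` vanishes to order `≥ j` at `p`;
the dimensions `λ_m = dim K_{m+1}` form the singularity partition of `A` at `p`.  Then the
order of vanishing of `det A(z)` at `p` is at least `λ_0 + λ_1 + ⋯`, i.e. for every `M` the
function `det A(z)` can be written near `p` as `(z−p)^{Σ_{m<M} λ_m}` times a function
analytic at `p`. -/
theorem stmt18 (n : ℕ) (D : Set ℂ) (hD : IsOpen D) (hconn : IsConnected D)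
    (A : ℂ → Matrix (Fin n) (Fin n) ℂ)
    (hA : ∀ i j, DifferentiableOn ℂ (fun z => A z i j) D)
    (p : ℂ) (hp : p ∈ D) (M : ℕ) :
    ∃ g : ℂ → ℂ, AnalyticAt ℂ g p ∧
      ∀ᶠ z in nhds p, (A z).det =
        (z - p) ^ (∑ m ∈ Finset.range M, Module.finrank ℂ
            ↥(Submodule.span ℂ {v : Fin n → ℂ | ∀ i : Fin n,
              ∃ g' : ℂ → ℂ, AnalyticAt ℂ g' p ∧
                ∀ᶠ z in nhds p, (A z).mulVec v i = (z - p) ^ (m + 1) * g' z})) * g z := by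
  classical
  have hAp : ∀ i j, AnalyticAt ℂ (fun z => A z i j) p :=
    fun i j => (hA i j).analyticAt (hD.mem_nhds hp)
  have hsetK : ∀ m : ℕ, Submodule.span ℂ {v : Fin n → ℂ | ∀ i : Fin n,
      ∃ g' : ℂ → ℂ, AnalyticAt ℂ g' p ∧
        ∀ᶠ z in nhds p, (A z).mulVec v i = (z - p) ^ (m + 1) * g' z}
      = Kmod A p (m + 1) := by
    intro m
    have hcoe : {v : Fin n → ℂ | ∀ i : Fin n,
        ∃ g' : ℂ → ℂ, AnalyticAt ℂ g' p ∧
          ∀ᶠ z in nhds p, (A z).mulVec v i = (z - p) ^ (m + 1) * g' z}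
        = (Kmod A p (m + 1) : Set (Fin n → ℂ)) := rfl
    rw [hcoe, Submodule.span_eq]
  obtain ⟨b, o, hspan, hmem, hsp⟩ := adapted (fun m => Kmod A p (m + 1))
    (fun j => Kmod_antitone A p (by omega)) M
  set N0 : ℕ := ∑ m ∈ Finset.range M, finrank ℂ (Kmod A p (m + 1)) with hN0def
  have hexp : (∑ m ∈ Finset.range M, finrank ℂ
      ↥(Submodule.span ℂ {v : Fin n → ℂ | ∀ i : Fin n,
        ∃ g' : ℂ → ℂ, AnalyticAt ℂ g' p ∧
          ∀ᶠ z in nhds p, (A z).mulVec v i = (z - p) ^ (m + 1) * g' z})) = N0 := by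
    refine Finset.sum_congr rfl ?_
    intro m _
    rw [hsetK m]
  rw [hexp]
  -- each basis vector vanishes to order `o j`
  have hvan : ∀ j i, ∃ g' : ℂ → ℂ, AnalyticAt ℂ g' p ∧
      ∀ᶠ z in nhds p, (A z).mulVec (b j) i = (z - p) ^ (o j) * g' z := by
    intro j i
    rcases Nat.eq_zero_or_pos (o j) with h0 | hpos
    · rw [h0]
      refine ⟨fun z => (A z).mulVec (b j) i, ?_, by filter_upwards with z; ring⟩
      have heq : (fun z => (A z).mulVec (b j) i) = fun z => ∑ k, A z i k * b j k := by
        funext z; simp [Matrix.mulVec, dotProduct]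
      rw [heq]
      exact Finset.analyticAt_fun_sum _ (fun k _ => (hAp i k).mul analyticAt_const)
    · have hmm : b j ∈ Kmod A p (o j) := by
        have h1 := hmem j (o j - 1) (Nat.sub_lt hpos Nat.one_pos)
        have h2 : o j - 1 + 1 = o j := Nat.succ_pred_eq_of_pos hpos
        rwa [h2] at h1
      exact hmm i
  choose G hG1 hG2 using hvan
  set P : Matrix (Fin n) (Fin n) ℂ := Matrix.of (fun i j => b j i) with hPdef
  have hPt : P.transpose = b := rfl
  have hsurj : Function.Surjective P.mulVecLin := by
    rw [← LinearMap.range_eq_top, Matrix.range_mulVecLin, (show P.col = b from rfl), hspan]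
  have hinj : Function.Injective P.mulVecLin :=
    LinearMap.injective_iff_surjective.mpr hsurj
  have hdetP : P.det ≠ 0 := by
    intro h
    obtain ⟨v, hv0, hv⟩ := (Matrix.exists_mulVec_eq_zero_iff).2 h
    apply hv0
    have : P.mulVecLin v = P.mulVecLin 0 := by
      simp [Matrix.mulVecLin_apply, hv]
    exact hinj this
  set B : ℂ → Matrix (Fin n) (Fin n) ℂ := fun z => Matrix.of (fun i j => G j i z) with hBdef
  have hBan : AnalyticAt ℂ (fun z => (B z).det) p :=
    analyticAt_det (fun i j => hG1 j i)
  set N : ℕ := ∑ j, o j with hNdef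
  have hev : ∀ᶠ z in nhds p, (A z).det * P.det = (z - p) ^ N * (B z).det := by
    have hall : ∀ᶠ z in nhds p, ∀ j i : Fin n,
        (A z).mulVec (b j) i = (z - p) ^ (o j) * G j i z := by
      rw [Filter.eventually_all]
      intro j
      rw [Filter.eventually_all]
      intro i
      exact hG2 j i
    filter_upwards [hall] with z hz
    have hAP : A z * P = Matrix.of (fun i j => (z - p) ^ (o j) * B z i j) := by
      ext i j
      rw [Matrix.mul_apply]
      have h1 : ∑ k, A z i k * P k j = (A z).mulVec (b j) i := by
        simp [Matrix.mulVec, dotProduct, hPdef]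
      rw [h1, hz j i]
      rfl
    calc (A z).det * P.det = (A z * P).det := (Matrix.det_mul _ _).symm
      _ = (∏ j, (z - p) ^ (o j)) * (B z).det := by
          rw [hAP]
          exact Matrix.det_mul_row _ _
      _ = (z - p) ^ N * (B z).det := by rw [Finset.prod_pow_eq_pow_sum]
  -- the exponent bound `N0 ≤ N`
  have hN0N : N0 ≤ N := by
    have hcard : ∀ m < M, finrank ℂ (Kmod A p (m + 1))
        ≤ (Finset.univ.filter (fun i : Fin n => m < o i)).card := by
      intro m hm
      have h1 : finrank ℂ (Kmod A p (m + 1))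
          ≤ finrank ℂ (Submodule.span ℂ (b '' {i | m < o i})) :=
        Submodule.finrank_mono (hsp m hm)
      have h2 : (b '' {i | m < o i})
          = (((Finset.univ.filter (fun i : Fin n => m < o i)).image b : Finset (Fin n → ℂ))
            : Set (Fin n → ℂ)) := by
        rw [Finset.coe_image]
        congr 1
        ext i
        simp
      have h3 := finrank_span_finset_le_card (R := ℂ)
        ((Finset.univ.filter (fun i : Fin n => m < o i)).image b)
      rw [Set.finrank] at h3
      calc finrank ℂ (Kmod A p (m + 1))
          ≤ finrank ℂ (Submodule.span ℂ (b '' {i | m < o i})) := h1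
        _ ≤ ((Finset.univ.filter (fun i : Fin n => m < o i)).image b).card := by
            rw [h2]; exact h3
        _ ≤ (Finset.univ.filter (fun i : Fin n => m < o i)).card := Finset.card_image_le
    have hdouble : ∑ m ∈ Finset.range M,
        (Finset.univ.filter (fun i : Fin n => m < o i)).card
        = ∑ i : Fin n, ((Finset.range M).filter (fun m => m < o i)).card := by
      simp_rw [Finset.card_filter]
      exact Finset.sum_comm
    calc N0 ≤ ∑ m ∈ Finset.range M,
          (Finset.univ.filter (fun i : Fin n => m < o i)).card :=
        Finset.sum_le_sum (fun m hm => hcard m (Finset.mem_range.1 hm))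
      _ = ∑ i : Fin n, ((Finset.range M).filter (fun m => m < o i)).card := hdouble
      _ ≤ ∑ j, o j := by
          refine Finset.sum_le_sum (fun i _ => ?_)
          calc ((Finset.range M).filter (fun m => m < o i)).card
              ≤ (Finset.range (o i)).card := by
                apply Finset.card_le_card
                intro m hm
                simp only [Finset.mem_filter, Finset.mem_range] at hm ⊢
                exact hm.2
            _ = o i := Finset.card_range _
  refine ⟨fun z => (z - p) ^ (N - N0) * (B z).det * (P.det)⁻¹, ?_, ?_⟩
  · exact (((analyticAt_id.sub analyticAt_const).pow _).mul hBan).mul analyticAt_const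
  · filter_upwards [hev] with z hz
    have hA' : (A z).det = (z - p) ^ N * (B z).det * (P.det)⁻¹ :=
      (eq_mul_inv_iff_mul_eq₀ hdetP).2 hz
    have hNsplit : (z - p) ^ N = (z - p) ^ N0 * (z - p) ^ (N - N0) := by
      rw [← pow_add, Nat.add_sub_cancel' hN0N]
    rw [hA', hNsplit]
    ring
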